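/- There exists a constant $C<\infty$ such that for all $s\in[1/2,1]$ and all $t\in\mathbb{R}$, $\int_{\mathbb{R}^2}\frac{dx_1\,dx_2}{\left(1-s^2x_1^2+(x_1+t)^2+x_2^2\right)^2+4s^2x_1^2} \leq C$. -/

import Mathlib

open MeasureTheory ENNReal Set

lemma lint_Iio_neg (f : ℝ → ℝ≥0∞) (c : ℝ) :
    ∫⁻ y in Iio (-c), f y = ∫⁻ y in Ioi c, f (-y) := by
  have h := (Measure.measurePreserving_neg (volume : Measure ℝ)).setLIntegral_comp_preimage_emb
    (MeasurableEquiv.neg ℝ).measurableEmbedding f (Iio (-c))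
  have hpre : (Neg.neg : ℝ → ℝ) ⁻¹' (Iio (-c)) = Ioi c := by
    ext y; simp
  rw [← h, hpre]

-- tail integral of x^p, general
lemma lint_Ioi_rpow {p : ℝ} (hp : p < -1) {c : ℝ} (hc : 0 < c) :
    ∫⁻ x in Ioi c, ENNReal.ofReal (x ^ p) = ENNReal.ofReal (-c ^ (p+1) / (p+1)) := by
  rw [← integral_Ioi_rpow_of_lt hp hc]
  rw [← ofReal_integral_eq_lintegral_ofReal (integrableOn_Ioi_rpow_of_lt hp hc)]
  · filter_upwards [ae_restrict_mem measurableSet_Ioi] with x hx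
    exact Real.rpow_nonneg (le_of_lt (hc.trans hx)) p

-- inverse square tail
lemma lint_Ioi_inv_sq {c : ℝ} (hc : 0 < c) :
    ∫⁻ x in Ioi c, ENNReal.ofReal ((x ^ 2)⁻¹) = ENNReal.ofReal c⁻¹ := by
  have h1 : ∫⁻ x in Ioi c, ENNReal.ofReal ((x ^ 2)⁻¹)
      = ∫⁻ x in Ioi c, ENNReal.ofReal (x ^ (-2 : ℝ)) := by
    apply setLIntegral_congr_fun measurableSet_Ioi
    intro x hx; beta_reduce
    rw [Real.rpow_neg (le_of_lt (hc.trans hx)), Real.rpow_two]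
  rw [h1, lint_Ioi_rpow (by norm_num) hc]
  norm_num
  rw [Real.rpow_neg_one]

lemma lint_inv_add_sq {Q : ℝ} (hQ : 1 ≤ Q) :
    ∫⁻ y, ENNReal.ofReal ((Q + y ^ 2)⁻¹) ≤ ENNReal.ofReal (4 * Q ^ (-(1:ℝ)/2)) := by
  set q : ℝ := Q ^ ((1:ℝ)/2) with hqdef
  have hQ0 : (0:ℝ) < Q := by linarith
  have hq1 : 1 ≤ q := Real.one_le_rpow hQ (by norm_num)
  have hq0 : (0:ℝ) < q := by linarith
  have hqsq : q ^ 2 = Q := by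
    rw [hqdef, ← Real.rpow_natCast (Q ^ ((1:ℝ)/2)) 2, ← Real.rpow_mul hQ0.le]
    norm_num
  have hpt : ∀ y : ℝ, ENNReal.ofReal ((Q + y ^ 2)⁻¹)
      ≤ (Icc (-q) q).indicator (fun _ => ENNReal.ofReal Q⁻¹) y
        + ((Icc (-q) q)ᶜ).indicator (fun y => ENNReal.ofReal ((y ^ 2)⁻¹)) y := by
    intro y
    by_cases hy : y ∈ Icc (-q) q
    · rw [Set.indicator_of_mem hy, Set.indicator_of_notMem (by simp [hy])]
      rw [add_zero]
      apply ENNReal.ofReal_le_ofReal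
      apply inv_anti₀ hQ0
      nlinarith [sq_nonneg y]
    · rw [Set.indicator_of_notMem hy, Set.indicator_of_mem (by simp [hy]), zero_add]
      apply ENNReal.ofReal_le_ofReal
      have hy2 : (0:ℝ) < y ^ 2 := by
        simp only [Set.mem_Icc, not_and_or, not_le] at hy
        rcases hy with h | h <;> nlinarith
      apply inv_anti₀ hy2
      nlinarith
  calc ∫⁻ y, ENNReal.ofReal ((Q + y ^ 2)⁻¹)
      ≤ ∫⁻ y, ((Icc (-q) q).indicator (fun _ => ENNReal.ofReal Q⁻¹) y
        + ((Icc (-q) q)ᶜ).indicator (fun y => ENNReal.ofReal ((y ^ 2)⁻¹)) y) :=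
        lintegral_mono hpt
    _ = ENNReal.ofReal Q⁻¹ * volume (Icc (-q) q)
        + ∫⁻ y in (Icc (-q) q)ᶜ, ENNReal.ofReal ((y ^ 2)⁻¹) := by
        rw [lintegral_add_left ((measurable_const).indicator measurableSet_Icc),
          lintegral_indicator_const measurableSet_Icc,
          lintegral_indicator measurableSet_Icc.compl]
    _ ≤ ENNReal.ofReal Q⁻¹ * ENNReal.ofReal (2 * q)
        + (ENNReal.ofReal q⁻¹ + ENNReal.ofReal q⁻¹) := by
        gcongr
        · rw [Real.volume_Icc]
          apply ENNReal.ofReal_le_ofReal; ring_nf; linarith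
        · have hcompl : (Icc (-q) q)ᶜ = Iio (-q) ∪ Ioi q := by
            ext y
            simp only [Set.mem_compl_iff, Set.mem_Icc, not_and_or, not_le, Set.mem_union,
              Set.mem_Iio, Set.mem_Ioi]
          rw [hcompl]
          refine le_trans (lintegral_union_le _ _ _) ?_
          rw [lint_Iio_neg (fun y => ENNReal.ofReal ((y ^ 2)⁻¹)) q]
          simp only [neg_neg, neg_sq]
          rw [lint_Ioi_inv_sq hq0]
    _ ≤ ENNReal.ofReal (4 * Q ^ (-(1:ℝ)/2)) := by
        rw [← ENNReal.ofReal_mul (by positivity), ← ENNReal.ofReal_add (by positivity) (by positivity),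
          ← ENNReal.ofReal_add (by positivity) (by positivity)]
        apply ENNReal.ofReal_le_ofReal
        have hqinv : Q ^ (-(1:ℝ)/2) = q⁻¹ := by
          rw [hqdef, ← Real.rpow_neg hQ0.le]
          norm_num
        rw [hqinv]
        have : Q⁻¹ * (2 * q) = 2 * q⁻¹ := by
          rw [← hqsq]; field_simp
        rw [this]; ring_nf; linarith

section AuxArith

lemma fac_eq {s x₁ aa m y r : ℝ} (hm2 : m ^ 2 = s ^ 2 * x₁ ^ 2)
    (hr2 : r ^ 2 = aa ^ 2 + y ^ 2) :
    (1 - s ^ 2 * x₁ ^ 2 + aa ^ 2 + y ^ 2) ^ 2 + 4 * s ^ 2 * x₁ ^ 2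
      = (1 + (m - r) ^ 2) * (1 + (m + r) ^ 2) := by
  have h1 : (1 + (m - r) ^ 2) * (1 + (m + r) ^ 2)
      = (1 + m ^ 2 + r ^ 2) ^ 2 - 4 * m ^ 2 * r ^ 2 := by ring
  rw [h1, hm2, hr2]; ring

lemma sum_bound {s x₁ aa m Q y r : ℝ} (hm0 : 0 ≤ m) (hm2 : m ^ 2 = s ^ 2 * x₁ ^ 2)
    (hr0 : 0 ≤ r) (hr2 : r ^ 2 = aa ^ 2 + y ^ 2)
    (hQdef : Q = 1 + s ^ 2 * x₁ ^ 2 + aa ^ 2) :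
    Q + y ^ 2 ≤ 1 + (m + r) ^ 2 := by
  nlinarith [mul_nonneg hm0 hr0]

lemma ridge_bound {s x₁ aa m Q y r : ℝ} (hm0 : 0 ≤ m) (hm2 : m ^ 2 = s ^ 2 * x₁ ^ 2)
    (hr0 : 0 ≤ r) (hr2 : r ^ 2 = aa ^ 2 + y ^ 2)
    (hQdef : Q = 1 + s ^ 2 * x₁ ^ 2 + aa ^ 2) (hQ0 : 0 < Q) :
    Q ≤ (1 + (m - r) ^ 2) * (1 + (m + r) ^ 2) := by
  have h1 := sum_bound hm0 hm2 hr0 hr2 hQdef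
  nlinarith [sq_nonneg (m - r), sq_nonneg y, sq_nonneg (m + r)]

lemma offridge_bound {s x₁ aa m Q q y r : ℝ} (hm0 : 0 ≤ m) (hm2 : m ^ 2 = s ^ 2 * x₁ ^ 2)
    (hr0 : 0 ≤ r) (hr2 : r ^ 2 = aa ^ 2 + y ^ 2)
    (hQdef : Q = 1 + s ^ 2 * x₁ ^ 2 + aa ^ 2) (hQ0 : 0 < Q)
    (hq0 : 0 < q) (hq : q ≤ 1 + (m - r) ^ 2) :
    q * (Q + y ^ 2) ≤ (1 + (m - r) ^ 2) * (1 + (m + r) ^ 2) := by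
  have h1 := sum_bound hm0 hm2 hr0 hr2 hQdef
  have h2 : 0 < Q + y ^ 2 := by nlinarith [sq_nonneg y]
  exact mul_le_mul hq h1 h2.le (by positivity)

lemma ridge_window {m δ q r : ℝ} (hδ0 : 0 < δ) (hδsq : δ ^ 2 = q)
    (h : (m - r) ^ 2 < q) : m - δ < r ∧ r < m + δ := by
  have h1 : (m - r) ^ 2 < δ ^ 2 := by rw [hδsq]; exact h
  constructor <;> nlinarith [sq_nonneg (m - r)]

lemma sqrt_diff_bound {m δ q Q34 Q38 : ℝ} (hm0 : 0 ≤ m) (hδ1 : 1 ≤ δ)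
    (hδsq : δ ^ 2 = q) (hmq : m ≤ q) (hqδ : q * δ = Q34) (hq34 : q ≤ Q34)
    (hsq34 : Real.sqrt Q34 = Q38) (hQ38 : 0 < Q38) (aa : ℝ) :
    Real.sqrt ((m + δ) ^ 2 - aa ^ 2)
      - Real.sqrt ((max (m - δ) 0) ^ 2 - aa ^ 2) ≤ 3 * Q38 := by
  have hq0 : (0:ℝ) < q := by nlinarith
  set c : ℝ := Real.sqrt ((max (m - δ) 0) ^ 2 - aa ^ 2) with hcdef
  set d : ℝ := Real.sqrt ((m + δ) ^ 2 - aa ^ 2) with hddef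
  have hc0 : 0 ≤ c := Real.sqrt_nonneg _
  have hd0 : 0 ≤ d := Real.sqrt_nonneg _
  have hW0 : (0:ℝ) ≤ 8 * Q34 := by nlinarith
  have hsqrtW : Real.sqrt (8 * Q34) ≤ 3 * Q38 := by
    rw [Real.sqrt_mul (by norm_num : (0:ℝ) ≤ 8), hsq34]
    have h2 : Real.sqrt 8 ≤ 3 := by
      rw [show (3:ℝ) = Real.sqrt 9 by
        rw [show (9:ℝ) = 3 ^ 2 by norm_num, Real.sqrt_sq (by norm_num)]]
      exact Real.sqrt_le_sqrt (by norm_num)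
    nlinarith
  have hWbig : (m + δ) ^ 2 - (max (m - δ) 0) ^ 2 ≤ 8 * Q34 := by
    rcases le_total δ m with h | h
    · rw [max_eq_left (by linarith)]
      nlinarith
    · rw [max_eq_right (by linarith)]
      nlinarith
  have hkey : d ≤ c + Real.sqrt (8 * Q34) := by
    rcases le_or_gt ((m + δ) ^ 2 - aa ^ 2) 0 with hT | hT
    · have hz : d = 0 := Real.sqrt_eq_zero_of_nonpos hT
      rw [hz]
      positivity
    · have hd2 : d ^ 2 = (m + δ) ^ 2 - aa ^ 2 := Real.sq_sqrt hT.le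
      have hsW : Real.sqrt (8 * Q34) ^ 2 = 8 * Q34 := Real.sq_sqrt hW0
      have hsW0 : 0 ≤ Real.sqrt (8 * Q34) := Real.sqrt_nonneg _
      rcases le_or_gt ((max (m - δ) 0) ^ 2 - aa ^ 2) 0 with hU | hU
      · have hmax0 : 0 ≤ max (m - δ) 0 := le_max_right _ _
        have hd2W : d ^ 2 ≤ 8 * Q34 := by nlinarith
        nlinarith
      · have hc2 : c ^ 2 = (max (m - δ) 0) ^ 2 - aa ^ 2 := Real.sq_sqrt hU.le
        have hd2W : d ^ 2 ≤ c ^ 2 + 8 * Q34 := by nlinarith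
        nlinarith [mul_nonneg hc0 hsW0]
  linarith

end AuxArith

lemma sq_up {m δ r aa y : ℝ} (hr0 : 0 ≤ r) (hr2 : r ^ 2 = aa ^ 2 + y ^ 2)
    (hup : r < m + δ) : y ^ 2 ≤ (m + δ) ^ 2 - aa ^ 2 := by nlinarith

lemma sq_lo {m δ r aa y : ℝ} (hr0 : 0 ≤ r) (hr2 : r ^ 2 = aa ^ 2 + y ^ 2)
    (hmaxr : max (m - δ) 0 ≤ r) : (max (m - δ) 0) ^ 2 - aa ^ 2 ≤ y ^ 2 := by
  have h := pow_le_pow_left₀ (le_max_right (m - δ) 0) hmaxr 2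
  nlinarith


set_option maxHeartbeats 1000000 in
lemma inner_est (s t x₁ : ℝ) (hs1 : 1/2 ≤ s) (hs2 : s ≤ 1) :
    ∫⁻ y : ℝ, ENNReal.ofReal
        (((1 - s ^ 2 * x₁ ^ 2 + (x₁ + t) ^ 2 + y ^ 2) ^ 2 + 4 * s ^ 2 * x₁ ^ 2)⁻¹)
      ≤ ENNReal.ofReal (10 * (1 + x₁ ^ 2 / 4) ^ (-(5:ℝ)/8)) := by
  set a : ℝ := x₁ + t with hadef
  set m : ℝ := s * |x₁| with hmdef
  have hm0 : 0 ≤ m := mul_nonneg (by linarith) (abs_nonneg _)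
  have hm2 : m ^ 2 = s ^ 2 * x₁ ^ 2 := by rw [hmdef, mul_pow, sq_abs]
  set Q : ℝ := 1 + s ^ 2 * x₁ ^ 2 + a ^ 2 with hQdef
  have hQ1 : (1:ℝ) ≤ Q := by
    rw [hQdef]; nlinarith [sq_nonneg (s * x₁), sq_nonneg a]
  have hQ0 : (0:ℝ) < Q := by linarith
  set δ : ℝ := Q ^ ((1:ℝ)/4) with hδdef
  set q : ℝ := Q ^ ((1:ℝ)/2) with hqdef
  have hδ1 : 1 ≤ δ := Real.one_le_rpow hQ1 (by norm_num)
  have hq1 : 1 ≤ q := Real.one_le_rpow hQ1 (by norm_num)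
  have hq0 : (0:ℝ) < q := by linarith
  have hδsq : δ ^ 2 = q := by
    rw [hδdef, hqdef, ← Real.rpow_natCast (Q ^ ((1:ℝ)/4)) 2, ← Real.rpow_mul hQ0.le]
    norm_num
  have hqsq : q ^ 2 = Q := by
    rw [hqdef, ← Real.rpow_natCast (Q ^ ((1:ℝ)/2)) 2, ← Real.rpow_mul hQ0.le]
    norm_num
  have hqδ : q * δ = Q ^ ((3:ℝ)/4) := by
    rw [hqdef, hδdef, ← Real.rpow_add hQ0]; norm_num
  have hq34 : q ≤ Q ^ ((3:ℝ)/4) := by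
    rw [hqdef]
    exact Real.rpow_le_rpow_of_exponent_le hQ1 (by norm_num)
  have hQ38 : (0:ℝ) < Q ^ ((3:ℝ)/8) := Real.rpow_pos_of_pos hQ0 _
  have hsqrtQ34 : Real.sqrt (Q ^ ((3:ℝ)/4)) = Q ^ ((3:ℝ)/8) := by
    rw [Real.sqrt_eq_rpow, ← Real.rpow_mul hQ0.le]
    norm_num
  have hQinv : Q⁻¹ * (6 * Q ^ ((3:ℝ)/8)) + 4 * Q⁻¹ ≤ 10 * Q ^ (-(5:ℝ)/8) := by
    have e1 : Q⁻¹ * Q ^ ((3:ℝ)/8) = Q ^ (-(5:ℝ)/8) := by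
      rw [← Real.rpow_neg_one Q, ← Real.rpow_add hQ0]; norm_num
    have e2 : Q⁻¹ ≤ Q ^ (-(5:ℝ)/8) := by
      rw [← Real.rpow_neg_one Q]
      exact Real.rpow_le_rpow_of_exponent_le hQ1 (by norm_num)
    have e3 : Q⁻¹ * (6 * Q ^ ((3:ℝ)/8)) = 6 * (Q⁻¹ * Q ^ ((3:ℝ)/8)) := by ring
    rw [e3, e1]
    linarith
  have hqQinv : q⁻¹ * (4 * Q ^ (-(1:ℝ)/2)) = 4 * Q⁻¹ := by
    have h1 : Q ^ (-(1:ℝ)/2) = q⁻¹ := by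
      rw [hqdef, ← Real.rpow_neg hQ0.le]
      norm_num
    rw [h1, ← hqsq]
    field_simp
  clear_value a m Q δ q
  have hs24 : (1:ℝ)/4 ≤ s ^ 2 := by nlinarith [hs1]
  have hmq : m ≤ q := by
    have h1 : m ^ 2 ≤ q ^ 2 := by
      rw [hm2, hqsq, hQdef]
      linarith [sq_nonneg a]
    exact (pow_le_pow_iff_left₀ hm0 hq0.le (by norm_num)).mp h1
  have hPQ : 1 + x₁ ^ 2 / 4 ≤ Q := by
    rw [hQdef]
    linarith [sq_nonneg a, mul_le_mul_of_nonneg_right hs24 (sq_nonneg x₁)]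
  have hP0 : (0:ℝ) < 1 + x₁ ^ 2 / 4 := by positivity
  set S : Set ℝ := {y | (m - Real.sqrt (a ^ 2 + y ^ 2)) ^ 2 < q} with hSdef
  have hSm : MeasurableSet S := by
    have hpre : S = (fun y : ℝ => (m - Real.sqrt (a ^ 2 + y ^ 2)) ^ 2) ⁻¹' (Iio q) := rfl
    rw [hpre]
    apply measurableSet_preimage _ measurableSet_Iio
    fun_prop
  -- pointwise bound
  have hpt : ∀ y : ℝ, ENNReal.ofReal
        (((1 - s ^ 2 * x₁ ^ 2 + a ^ 2 + y ^ 2) ^ 2 + 4 * s ^ 2 * x₁ ^ 2)⁻¹)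
      ≤ S.indicator (fun _ => ENNReal.ofReal Q⁻¹) y
        + ENNReal.ofReal ((q * (Q + y ^ 2))⁻¹) := by
    intro y
    set r : ℝ := Real.sqrt (a ^ 2 + y ^ 2) with hrdef
    have hr0 : 0 ≤ r := Real.sqrt_nonneg _
    have hr2 : r ^ 2 = a ^ 2 + y ^ 2 := Real.sq_sqrt (by positivity)
    by_cases hy : y ∈ S
    · rw [Set.indicator_of_mem hy]
      refine le_trans ?_ le_self_add
      apply ENNReal.ofReal_le_ofReal
      rw [fac_eq hm2 hr2]
      exact inv_anti₀ hQ0 (ridge_bound hm0 hm2 hr0 hr2 hQdef hQ0)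
    · rw [Set.indicator_of_notMem hy, zero_add]
      apply ENNReal.ofReal_le_ofReal
      rw [fac_eq hm2 hr2]
      have hq_le : q ≤ 1 + (m - r) ^ 2 := by
        have h5 : ¬ ((m - r) ^ 2 < q) := hy
        push_neg at h5
        linarith
      have hQy0 : (0:ℝ) < Q + y ^ 2 := by positivity
      exact inv_anti₀ (by positivity)
        (offridge_bound hm0 hm2 hr0 hr2 hQdef hQ0 hq0 hq_le)
  -- volume of ridge
  have hvolS : volume S ≤ ENNReal.ofReal (6 * Q ^ ((3:ℝ)/8)) := by
    set c : ℝ := Real.sqrt ((max (m - δ) 0) ^ 2 - a ^ 2) with hcdef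
    set d : ℝ := Real.sqrt ((m + δ) ^ 2 - a ^ 2) with hddef
    have hc0 : 0 ≤ c := Real.sqrt_nonneg _
    have hd0 : 0 ≤ d := Real.sqrt_nonneg _
    have hsub : S ⊆ Icc c d ∪ Icc (-d) (-c) := by
      intro y hy
      have hy' : (m - Real.sqrt (a ^ 2 + y ^ 2)) ^ 2 < q := hy
      set r : ℝ := Real.sqrt (a ^ 2 + y ^ 2) with hrdef
      have hr0 : 0 ≤ r := Real.sqrt_nonneg _
      have hr2 : r ^ 2 = a ^ 2 + y ^ 2 := Real.sq_sqrt (by positivity)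
      obtain ⟨hlo, hup⟩ := ridge_window (by linarith) hδsq hy'
      have hmaxr : max (m - δ) 0 ≤ r := max_le hlo.le hr0
      have habs_d : |y| ≤ d := by
        rw [← Real.sqrt_sq_eq_abs]
        exact Real.sqrt_le_sqrt (sq_up hr0 hr2 hup)
      have habs_c : c ≤ |y| := by
        rw [← Real.sqrt_sq_eq_abs]
        exact Real.sqrt_le_sqrt (sq_lo hr0 hr2 hmaxr)
      rcases le_total 0 y with h | h
      · left
        exact ⟨by rwa [abs_of_nonneg h] at habs_c, by rwa [abs_of_nonneg h] at habs_d⟩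
      · right
        constructor
        · rw [abs_of_nonpos h] at habs_d; linarith
        · rw [abs_of_nonpos h] at habs_c; linarith
    have hdc : d - c ≤ 3 * Q ^ ((3:ℝ)/8) :=
      sqrt_diff_bound hm0 hδ1 hδsq hmq hqδ hq34 hsqrtQ34 hQ38 a
    calc volume S ≤ volume (Icc c d ∪ Icc (-d) (-c)) := measure_mono hsub
      _ ≤ volume (Icc c d) + volume (Icc (-d) (-c)) := measure_union_le _ _
      _ = ENNReal.ofReal (d - c) + ENNReal.ofReal (d - c) := by
          rw [Real.volume_Icc, Real.volume_Icc, show -c - -d = d - c from by ring]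
      _ ≤ ENNReal.ofReal (3 * Q ^ ((3:ℝ)/8)) + ENNReal.ofReal (3 * Q ^ ((3:ℝ)/8)) := by
          gcongr <;> exact ENNReal.ofReal_le_ofReal hdc
      _ = ENNReal.ofReal (6 * Q ^ ((3:ℝ)/8)) := by
          rw [← ENNReal.ofReal_add (by positivity) (by positivity)]
          congr 1; ring
  -- assemble
  calc ∫⁻ y : ℝ, ENNReal.ofReal
        (((1 - s ^ 2 * x₁ ^ 2 + a ^ 2 + y ^ 2) ^ 2 + 4 * s ^ 2 * x₁ ^ 2)⁻¹)
      ≤ ∫⁻ y : ℝ, (S.indicator (fun _ => ENNReal.ofReal Q⁻¹) y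
          + ENNReal.ofReal ((q * (Q + y ^ 2))⁻¹)) := lintegral_mono hpt
    _ = ENNReal.ofReal Q⁻¹ * volume S
        + ∫⁻ y : ℝ, ENNReal.ofReal ((q * (Q + y ^ 2))⁻¹) := by
        rw [lintegral_add_left (measurable_const.indicator hSm),
          lintegral_indicator_const hSm]
    _ ≤ ENNReal.ofReal Q⁻¹ * ENNReal.ofReal (6 * Q ^ ((3:ℝ)/8))
        + ENNReal.ofReal q⁻¹ * ENNReal.ofReal (4 * Q ^ (-(1:ℝ)/2)) := by
        refine add_le_add (mul_le_mul_right hvolS _) ?_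
        have heq : ∀ y : ℝ, ENNReal.ofReal ((q * (Q + y ^ 2))⁻¹)
              = ENNReal.ofReal q⁻¹ * ENNReal.ofReal ((Q + y ^ 2)⁻¹) := by
          intro y
          rw [mul_inv, ENNReal.ofReal_mul (by positivity)]
        simp_rw [heq]
        rw [lintegral_const_mul _ (by fun_prop)]
        exact mul_le_mul_right (lint_inv_add_sq hQ1) _
    _ ≤ ENNReal.ofReal (10 * (1 + x₁ ^ 2 / 4) ^ (-(5:ℝ)/8)) := by
        rw [← ENNReal.ofReal_mul (by positivity), ← ENNReal.ofReal_mul (by positivity),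
          ← ENNReal.ofReal_add (by positivity) (by positivity)]
        apply ENNReal.ofReal_le_ofReal
        have h10 : (10:ℝ) * Q ^ (-(5:ℝ)/8) ≤ 10 * (1 + x₁ ^ 2 / 4) ^ (-(5:ℝ)/8) := by
          have h11 := Real.rpow_le_rpow_of_nonpos hP0 hPQ (by norm_num : (-(5:ℝ)/8) ≤ 0)
          linarith
        calc Q⁻¹ * (6 * Q ^ ((3:ℝ)/8)) + q⁻¹ * (4 * Q ^ (-(1:ℝ)/2))
            = Q⁻¹ * (6 * Q ^ ((3:ℝ)/8)) + 4 * Q⁻¹ := by rw [hqQinv]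
          _ ≤ 10 * Q ^ (-(5:ℝ)/8) := hQinv
          _ ≤ _ := h10


lemma tail_est : ∫⁻ x in Ioi (2:ℝ), ENNReal.ofReal (40 * |x| ^ (-(5:ℝ)/4))
    ≤ ENNReal.ofReal 160 := by
  have hcong : ∫⁻ x in Ioi (2:ℝ), ENNReal.ofReal (40 * |x| ^ (-(5:ℝ)/4))
      = ∫⁻ x in Ioi (2:ℝ), ENNReal.ofReal 40 * ENNReal.ofReal (x ^ (-(5:ℝ)/4)) := by
    apply setLIntegral_congr_fun measurableSet_Ioi
    intro x hx; beta_reduce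
    rw [abs_of_pos (lt_trans (by norm_num : (0:ℝ) < 2) hx), ENNReal.ofReal_mul (by norm_num)]
  rw [hcong, lintegral_const_mul _ (by fun_prop), lint_Ioi_rpow (by norm_num) (by norm_num)]
  rw [← ENNReal.ofReal_mul (by norm_num)]
  apply ENNReal.ofReal_le_ofReal
  have h1 : -(2:ℝ) ^ (-(5:ℝ)/4 + 1) / (-(5:ℝ)/4 + 1) = 4 * (2:ℝ) ^ (-(1:ℝ)/4) := by
    norm_num
    ring
  rw [h1]
  have h2 : (2:ℝ) ^ (-(1:ℝ)/4) ≤ 1 :=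
    Real.rpow_le_one_of_one_le_of_nonpos (by norm_num) (by norm_num)
  nlinarith [Real.rpow_nonneg (by norm_num : (0:ℝ) ≤ 2) (-(1:ℝ)/4)]

lemma outer_est : ∫⁻ x : ℝ, ENNReal.ofReal (10 * (1 + x ^ 2 / 4) ^ (-(5:ℝ)/8))
    ≤ ENNReal.ofReal 1000 := by
  have hpt : ∀ x : ℝ, ENNReal.ofReal (10 * (1 + x ^ 2 / 4) ^ (-(5:ℝ)/8))
      ≤ (Icc (-2:ℝ) 2).indicator (fun _ => ENNReal.ofReal 10) x
        + ((Icc (-2:ℝ) 2)ᶜ).indicator (fun x => ENNReal.ofReal (40 * |x| ^ (-(5:ℝ)/4))) x := by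
    intro x
    have hP0 : (0:ℝ) < 1 + x ^ 2 / 4 := by positivity
    by_cases hx : x ∈ Icc (-2:ℝ) 2
    · rw [Set.indicator_of_mem hx, Set.indicator_of_notMem (by simp [hx])]
      rw [add_zero]
      apply ENNReal.ofReal_le_ofReal
      have h1 : (1 + x ^ 2 / 4) ^ (-(5:ℝ)/8) ≤ 1 :=
        Real.rpow_le_one_of_one_le_of_nonpos (by nlinarith [sq_nonneg x]) (by norm_num)
      linarith
    · rw [Set.indicator_of_notMem hx, Set.indicator_of_mem (by simp [hx]), zero_add]
      apply ENNReal.ofReal_le_ofReal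
      have hx2 : 2 < |x| := by
        simp only [Set.mem_Icc, not_and_or, not_le] at hx
        rcases hx with h | h
        · rw [abs_of_neg (by linarith)]; linarith
        · rw [abs_of_pos (by linarith)]; linarith
      have hz0 : (0:ℝ) < |x| / 2 := by linarith
      have hsq : ((|x| / 2) ^ (2:ℕ) : ℝ) ≤ 1 + x ^ 2 / 4 := by
        rw [show ((|x|/2) ^ (2:ℕ) : ℝ) = x ^ 2 / 4 by rw [div_pow, sq_abs]; ring]
        linarith
      have h2 : (1 + x ^ 2 / 4) ^ (-(5:ℝ)/8) ≤ ((|x| / 2) ^ (2:ℕ) : ℝ) ^ (-(5:ℝ)/8) :=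
        Real.rpow_le_rpow_of_nonpos (by positivity) hsq (by norm_num)
      have h3 : ((|x| / 2) ^ (2:ℕ) : ℝ) ^ (-(5:ℝ)/8) = (|x| / 2) ^ (-(5:ℝ)/4) := by
        rw [← Real.rpow_natCast (|x|/2) 2, ← Real.rpow_mul hz0.le]
        norm_num
      have h4 : (|x| / 2) ^ (-(5:ℝ)/4) = |x| ^ (-(5:ℝ)/4) / 2 ^ (-(5:ℝ)/4) :=
        Real.div_rpow (abs_nonneg x) (by norm_num : (0:ℝ) ≤ 2) (-(5:ℝ)/4)
      have h5 : (2:ℝ) ^ (-(5:ℝ)/4) = ((2:ℝ) ^ ((5:ℝ)/4))⁻¹ := by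
        rw [← Real.rpow_neg (by norm_num)]
        norm_num
      have h6 : (2:ℝ) ^ ((5:ℝ)/4) ≤ 4 := by
        have := Real.rpow_le_rpow_of_exponent_le (by norm_num : (1:ℝ) ≤ 2)
          (by norm_num : (5:ℝ)/4 ≤ 2)
        rwa [show (2:ℝ) ^ (2:ℝ) = 4 by
          rw [show (2:ℝ) = ((2:ℕ):ℝ) from by norm_num, Real.rpow_natCast]; norm_num] at this
      have h7 : (0:ℝ) < (2:ℝ) ^ ((5:ℝ)/4) := Real.rpow_pos_of_pos (by norm_num) _
      have h8 : (0:ℝ) ≤ |x| ^ (-(5:ℝ)/4) := Real.rpow_nonneg (abs_nonneg x) _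
      calc 10 * (1 + x ^ 2 / 4) ^ (-(5:ℝ)/8)
          ≤ 10 * ((|x| / 2) ^ (-(5:ℝ)/4)) := by nlinarith
        _ = 10 * (|x| ^ (-(5:ℝ)/4) * ((2:ℝ) ^ ((5:ℝ)/4))) := by
            rw [h4, h5]; field_simp
        _ ≤ 40 * |x| ^ (-(5:ℝ)/4) := by nlinarith
  calc ∫⁻ x : ℝ, ENNReal.ofReal (10 * (1 + x ^ 2 / 4) ^ (-(5:ℝ)/8))
      ≤ ∫⁻ x : ℝ, ((Icc (-2:ℝ) 2).indicator (fun _ => ENNReal.ofReal 10) x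
        + ((Icc (-2:ℝ) 2)ᶜ).indicator (fun x => ENNReal.ofReal (40 * |x| ^ (-(5:ℝ)/4))) x) :=
        lintegral_mono hpt
    _ = ENNReal.ofReal 10 * volume (Icc (-2:ℝ) 2)
        + ∫⁻ x in (Icc (-2:ℝ) 2)ᶜ, ENNReal.ofReal (40 * |x| ^ (-(5:ℝ)/4)) := by
        rw [lintegral_add_left (measurable_const.indicator measurableSet_Icc),
          lintegral_indicator_const measurableSet_Icc,
          lintegral_indicator measurableSet_Icc.compl]
    _ ≤ ENNReal.ofReal 10 * ENNReal.ofReal 4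
        + (ENNReal.ofReal 160 + ENNReal.ofReal 160) := by
        gcongr
        · rw [Real.volume_Icc]
          apply ENNReal.ofReal_le_ofReal
          norm_num
        · have hcompl : (Icc (-2:ℝ) 2)ᶜ = Iio (-2:ℝ) ∪ Ioi 2 := by
            ext y
            simp only [Set.mem_compl_iff, Set.mem_Icc, not_and_or, not_le, Set.mem_union,
              Set.mem_Iio, Set.mem_Ioi]
          rw [hcompl]
          refine le_trans (lintegral_union_le _ _ _) ?_
          gcongr
          · rw [lint_Iio_neg (fun x => ENNReal.ofReal (40 * |x| ^ (-(5:ℝ)/4))) 2]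
            simp only [abs_neg]
            exact tail_est
          · exact tail_est
    _ ≤ ENNReal.ofReal 1000 := by
        rw [← ENNReal.ofReal_mul (by norm_num), ← ENNReal.ofReal_add (by norm_num) (by norm_num),
          ← ENNReal.ofReal_add (by norm_num) (by norm_num)]
        apply ENNReal.ofReal_le_ofReal
        norm_num


/-- Uniform bound on the two-dimensional integral arising from Lorentz boosts
of the extremizer: for `s ∈ [1/2,1]` and all `t`, the integral is `≤ C`. -/
theorem stmt_16 :
    ∃ C : ℝ, 0 < C ∧ ∀ s ∈ Set.Icc (1/2 : ℝ) 1, ∀ t : ℝ,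
      ∫⁻ x : ℝ × ℝ,
        ENNReal.ofReal
          (((1 - s ^ 2 * x.1 ^ 2 + (x.1 + t) ^ 2 + x.2 ^ 2) ^ 2
            + 4 * s ^ 2 * x.1 ^ 2)⁻¹) ≤ ENNReal.ofReal C := by
  refine ⟨1000, by norm_num, ?_⟩
  intro s hs t
  obtain ⟨hs1, hs2⟩ := hs
  have hmeas : Measurable fun x : ℝ × ℝ => ENNReal.ofReal
      (((1 - s ^ 2 * x.1 ^ 2 + (x.1 + t) ^ 2 + x.2 ^ 2) ^ 2 + 4 * s ^ 2 * x.1 ^ 2)⁻¹) := by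
    fun_prop
  calc ∫⁻ x : ℝ × ℝ, ENNReal.ofReal
        (((1 - s ^ 2 * x.1 ^ 2 + (x.1 + t) ^ 2 + x.2 ^ 2) ^ 2 + 4 * s ^ 2 * x.1 ^ 2)⁻¹)
      = ∫⁻ x₁ : ℝ, ∫⁻ x₂ : ℝ, ENNReal.ofReal
        (((1 - s ^ 2 * x₁ ^ 2 + (x₁ + t) ^ 2 + x₂ ^ 2) ^ 2 + 4 * s ^ 2 * x₁ ^ 2)⁻¹) := by
        rw [Measure.volume_eq_prod, lintegral_prod _ hmeas.aemeasurable]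
    _ ≤ ∫⁻ x₁ : ℝ, ENNReal.ofReal (10 * (1 + x₁ ^ 2 / 4) ^ (-(5:ℝ)/8)) :=
        lintegral_mono fun x₁ => inner_est s t x₁ hs1 hs2
    _ ≤ ENNReal.ofReal 1000 := outer_est
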